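/- On an open subset of ℝ³ with coordinates (x,u,u_1) where xu ≠ 0, the function I_2(x,u,u_1) = ln(x) - u/(x(1+u_1)) is a first integral of the vector field A = ∂_x + u_1∂_u - ((u_1+1)(x+u)/(xu))∂_{u_1}, i.e., A(I_2) = 0, and moreover X_1(I_2) = 0 where X_1 = ∂_u + ((u_1+1)/u)∂_{u_1}. -/

import Mathlib

noncomputable section

/-- Points `(x, u, u₁)` of the first-order jet space, modelled as ℝ³. -/
abbrev R3 := ℝ × ℝ × ℝ

/-- Partial derivative with respect to the first coordinate `x`. -/
def pX (f : R3 → ℝ) (p : R3) : ℝ := deriv (fun t => f (t, p.2.1, p.2.2)) p.1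

/-- Partial derivative with respect to the second coordinate `u`. -/
def pU (f : R3 → ℝ) (p : R3) : ℝ := deriv (fun t => f (p.1, t, p.2.2)) p.2.1

/-- Partial derivative with respect to the third coordinate `u₁`. -/
def pV (f : R3 → ℝ) (p : R3) : ℝ := deriv (fun t => f (p.1, p.2.1, t)) p.2.2

/-- Lie bracket of vector fields on ℝ³. -/
def lieB (X Y : R3 → R3) : R3 → R3 :=
  fun p => fderiv ℝ Y p (X p) - fderiv ℝ X p (Y p)

/-- on the open set where `x > 0`, `u ≠ 0`, `u₁ ≠ -1`, the function
`I₂(x,u,u₁) = ln x - u/(x(1+u₁))` is a first integral of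
`A = ∂_x + u₁∂_u - ((u₁+1)(x+u)/(xu))∂_{u₁}`, and `X₁(I₂) = 0` for
`X₁ = ∂_u + ((u₁+1)/u)∂_{u₁}`. -/
theorem first_integral_example_one_lie :
    ∀ p : R3, 0 < p.1 → p.2.1 ≠ 0 → p.2.2 ≠ -1 →
      fderiv ℝ (fun q : R3 => Real.log q.1 - q.2.1 / (q.1 * (1 + q.2.2))) p
          ((1, p.2.2, -((p.2.2 + 1) * (p.1 + p.2.1)) / (p.1 * p.2.1)) : R3) = 0 ∧
      fderiv ℝ (fun q : R3 => Real.log q.1 - q.2.1 / (q.1 * (1 + q.2.2))) p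
          ((0, 1, (p.2.2 + 1) / p.2.1) : R3) = 0 := by
  intro p hx hu hv
  obtain ⟨a, b, c⟩ := p
  simp only at hx hu hv ⊢
  have ha : a ≠ 0 := ne_of_gt hx
  have hc : 1 + c ≠ 0 := by intro h; apply hv; linarith
  have hden : a * (1 + c) ≠ 0 := mul_ne_zero ha hc
  -- projections
  have hX : HasFDerivAt (fun q : R3 => q.1)
      (ContinuousLinearMap.fst ℝ ℝ (ℝ × ℝ)) (a, b, c) :=
    (ContinuousLinearMap.fst ℝ ℝ (ℝ × ℝ)).hasFDerivAt
  have hU : HasFDerivAt (fun q : R3 => q.2.1)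
      ((ContinuousLinearMap.fst ℝ ℝ ℝ).comp (ContinuousLinearMap.snd ℝ ℝ (ℝ × ℝ))) (a, b, c) :=
    ((ContinuousLinearMap.fst ℝ ℝ ℝ).comp (ContinuousLinearMap.snd ℝ ℝ (ℝ × ℝ))).hasFDerivAt
  have hV : HasFDerivAt (fun q : R3 => q.2.2)
      ((ContinuousLinearMap.snd ℝ ℝ ℝ).comp (ContinuousLinearMap.snd ℝ ℝ (ℝ × ℝ))) (a, b, c) :=
    ((ContinuousLinearMap.snd ℝ ℝ ℝ).comp (ContinuousLinearMap.snd ℝ ℝ (ℝ × ℝ))).hasFDerivAt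
  have hlog := HasFDerivAt.log hX ha
  have h1 : HasFDerivAt (fun _ : R3 => (1 : ℝ)) (0 : R3 →L[ℝ] ℝ) (a, b, c) := hasFDerivAt_const 1 _
  have hd := hX.mul (h1.add hV)
  have hinv := (hasFDerivAt_inv hden).comp (a, b, c) hd
  have hq := hU.mul hinv
  have hf := hlog.sub hq
  simp only [Function.comp_def] at hf
  simp only [div_eq_mul_inv]
  rw [HasFDerivAt.fderiv (f := fun q : R3 => Real.log q.1 - q.2.1 * (q.1 * (1 + q.2.2))⁻¹) hf]
  constructor <;>
  · simp only [ContinuousLinearMap.coe_sub', Pi.sub_apply, ContinuousLinearMap.smul_apply,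
      ContinuousLinearMap.coe_smul', Pi.smul_apply, ContinuousLinearMap.add_apply,
      ContinuousLinearMap.coe_comp', Function.comp_apply, ContinuousLinearMap.coe_fst',
      ContinuousLinearMap.coe_snd', ContinuousLinearMap.zero_apply, zero_add, smul_eq_mul,
      Pi.add_apply, Pi.mul_apply, ContinuousLinearMap.toSpanSingleton_apply]
    field_simp
    ring
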